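/- Let p be an odd prime and d > 1. Suppose the sequence y over {0,1} defined by y_n = 1 iff v_p((q-1)n+1) ≡ 0 mod d is eventually periodic with period k = M·p^N where p ∤ M, and q ≢ 1 mod p is prime. Then there exist arbitrarily large n and a positive integer a with v_p((q-1)n+1) = dN and v_p((q-1)(n+ak)+1) = dN+1, contradicting periodicity. -/

import Mathlib

private lemma padic_helper (p : ℕ) [Fact p.Prime] (v m : ℕ)
    (hm : m ≡ p ^ v [MOD p ^ (v + 1)]) : padicValNat p m = v := by
  have hp1 : 1 < p := (Fact.out : p.Prime).one_lt
  have h2 : ¬ p ^ (v + 1) ∣ m := by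
    intro hdvd
    have h0 : m ≡ 0 [MOD p ^ (v + 1)] := Nat.modEq_zero_iff_dvd.mpr hdvd
    have hdd : p ^ (v + 1) ∣ p ^ v := Nat.modEq_zero_iff_dvd.mp (hm.symm.trans h0)
    have := (Nat.pow_dvd_pow_iff_le_right hp1).mp hdd
    omega
  have hm0 : m ≠ 0 := by rintro rfl; exact h2 (dvd_zero _)
  have h1 : p ^ v ∣ m := by
    have hmm : m ≡ p ^ v [MOD p ^ v] := hm.of_dvd (pow_dvd_pow p (Nat.le_succ v))
    exact Nat.modEq_zero_iff_dvd.mp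
      (hmm.trans (Nat.modEq_zero_iff_dvd.mpr dvd_rfl))
  have hle : v ≤ padicValNat p m := (padicValNat_dvd_iff_le hm0).mp h1
  have hlt : padicValNat p m < v + 1 := by
    by_contra h
    exact h2 ((padicValNat_dvd_iff_le hm0).mpr (by omega))
  omega

private lemma exists_mul_modeq {e P : ℕ} (c : ℕ) (h : Nat.Coprime e P) (hP : 1 < P) :
    ∃ x, e * x ≡ c [MOD P] := by
  obtain ⟨m, -, hm⟩ := Nat.exists_mul_mod_eq_one_of_coprime h hP
  refine ⟨m * c, ?_⟩
  have h1 : e * m ≡ 1 [MOD P] := by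
    unfold Nat.ModEq
    rw [hm, Nat.mod_eq_of_lt hP]
  calc e * (m * c) = e * m * c := by ring
    _ ≡ 1 * c [MOD P] := h1.mul_right c
    _ = c := by ring

theorem exists_valuation_jump (p q d M N : ℕ) [Fact p.Prime] (hp : Odd p)
    (hq : q.Prime) (hq1 : q % p ≠ 1) (hd : 1 < d) (hM : 0 < M) (hpM : ¬ p ∣ M)
    (k : ℕ) (hk : k = M * p ^ N)
    (hper : ∃ N₀ : ℕ, ∀ n ≥ N₀,
      (d ∣ padicValNat p ((q - 1) * (n + k) + 1) ↔ d ∣ padicValNat p ((q - 1) * n + 1))) :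
    ∀ B : ℕ, ∃ n ≥ B, ∃ a : ℕ, 0 < a ∧
      padicValNat p ((q - 1) * n + 1) = d * N ∧
      padicValNat p ((q - 1) * (n + a * k) + 1) = d * N + 1 := by
  intro B
  have hpp : p.Prime := Fact.out
  have hp1 : 1 < p := hpp.one_lt
  have hp3 : 3 ≤ p := by
    rcases hp with ⟨t, ht⟩
    omega
  set e : ℕ := q - 1 with he_def
  have hq2 : 2 ≤ q := hq.two_le
  -- p does not divide e
  have hpe : ¬ p ∣ e := by
    intro hdvd
    have : q % p = 1 := by
      obtain ⟨c, hc⟩ := hdvd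
      have hqe : q = p * c + 1 := by omega
      rw [hqe, Nat.mul_add_mod, Nat.mod_eq_of_lt hp1]
    exact hq1 this
  have hcop_ep : Nat.Coprime e p := ((Nat.Prime.coprime_iff_not_dvd hpp).mpr hpe).symm
  set P : ℕ := p ^ (d * N + 2) with hP_def
  have hP1 : 1 < P := Nat.one_lt_pow (by omega) hp1
  -- choose x with e * x ≡ p^(dN) - 1 mod P
  obtain ⟨x, hx⟩ := exists_mul_modeq (p ^ (d * N) - 1) (hcop_ep.pow_right _) hP1
  -- choose b with (e*M) * b ≡ p - 1 mod p^2
  have hcop_eM : Nat.Coprime (e * M) (p ^ 2) :=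
    (Nat.Coprime.mul hcop_ep (((Nat.Prime.coprime_iff_not_dvd hpp).mpr hpM).symm)).pow_right _
  obtain ⟨b, hb⟩ := exists_mul_modeq (p - 1) hcop_eM (Nat.one_lt_pow (by omega) hp1)
  have hb0 : b ≠ 0 := by
    rintro rfl
    rw [mul_zero] at hb
    have : p ^ 2 ∣ p - 1 := Nat.modEq_zero_iff_dvd.mp hb.symm
    have h2 : p ≤ p ^ 2 := Nat.le_self_pow two_ne_zero p
    have := Nat.le_of_dvd (by omega) this
    omega
  set n : ℕ := x + B * P with hn_def
  have hnB : n ≥ B := by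
    have : B * 1 ≤ B * P := Nat.mul_le_mul_left B (le_of_lt hP1)
    omega
  set a : ℕ := p ^ (d * N - N) * b with ha_def
  have hNle : N ≤ d * N := Nat.le_mul_of_pos_left N (by omega)
  have ha0 : 0 < a := by positivity
  -- main congruence for n
  have hpow1 : 1 ≤ p ^ (d * N) := Nat.one_le_pow _ _ (by omega)
  have hmain : e * n + 1 ≡ p ^ (d * N) [MOD P] := by
    have h0 : e * n + 1 = (e * x + 1) + (e * B) * P := by rw [hn_def]; ring
    have hz : e * B * P ≡ 0 [MOD P] := Nat.modEq_zero_iff_dvd.mpr ⟨e * B, mul_comm _ _⟩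
    calc e * n + 1 = (e * x + 1) + e * B * P := h0
      _ ≡ (e * x + 1) + 0 [MOD P] := Nat.ModEq.add_left _ hz
      _ = e * x + 1 := by ring
      _ ≡ (p ^ (d * N) - 1) + 1 [MOD P] := hx.add_right 1
      _ = p ^ (d * N) := by omega
  -- congruence for the a*k part
  have hak : a * k = b * M * p ^ (d * N) := by
    rw [ha_def, hk]
    rw [show p ^ (d * N - N) * b * (M * p ^ N) = b * M * (p ^ (d * N - N) * p ^ N) by ring,
      ← pow_add, Nat.sub_add_cancel hNle]
  have hcong2 : e * (a * k) ≡ (p - 1) * p ^ (d * N) [MOD P] := by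
    have h1 : e * M * b * p ^ (d * N) ≡ (p - 1) * p ^ (d * N) [MOD p ^ 2 * p ^ (d * N)] :=
      hb.mul_right' _
    have hPe : p ^ 2 * p ^ (d * N) = P := by rw [hP_def, ← pow_add]; ring_nf
    rw [hPe] at h1
    calc e * (a * k) = e * M * b * p ^ (d * N) := by rw [hak]; ring
      _ ≡ (p - 1) * p ^ (d * N) [MOD P] := h1
  have hmain2 : e * (n + a * k) + 1 ≡ p ^ (d * N + 1) [MOD P] := by
    calc e * (n + a * k) + 1 = (e * n + 1) + e * (a * k) := by ring
      _ ≡ p ^ (d * N) + (p - 1) * p ^ (d * N) [MOD P] := hmain.add hcong2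
      _ = p ^ (d * N + 1) := by
          rw [pow_succ]
          have : 1 + (p - 1) = p := by omega
          nlinarith [hpow1]
  refine ⟨n, hnB, a, ha0, ?_, ?_⟩
  · exact padic_helper p (d * N) _ (hmain.of_dvd (pow_dvd_pow p (by omega)))
  · exact padic_helper p (d * N + 1) _ hmain2
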